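/- Let F_n be the abstract Fibonacci polynomials in ℂ⟨x, x^{-1}, y⟩ extended to all integer indices. Then the noncommutative Euler–Cassini identity holds for all integers n and k: (-1)^n · F_k(x,y) = F_{n-2}(x^{-1}, x^{-1}y) · x^{-1} · F_{n+k}(x,y) - F_{n-1}(x^{-1}, x^{-1}y) · F_{n+k-1}(x,y). -/

import Mathlib

/-- The noncommutative Euler–Cassini identity:
(-1)^n F_k(x,y) = F_{n-2}(x⁻¹,x⁻¹y)·x⁻¹·F_{n+k}(x,y)
                  - F_{n-1}(x⁻¹,x⁻¹y)·F_{n+k-1}(x,y),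
for all integers n and k. -/
theorem noncommutative_euler_cassini {R : Type*} [Ring R] [Algebra ℂ R]
    (x xi y : R) (hx : x * xi = 1) (hx' : xi * x = 1)
    (F G : ℤ → R)
    (hF0 : F 0 = 1) (hF1 : F 1 = y)
    (hFrec : ∀ n : ℤ, F (n + 2) = F n * x + F (n + 1) * y)
    (hG0 : G 0 = 1) (hG1 : G 1 = xi * y)
    (hGrec : ∀ n : ℤ, G (n + 2) = G n * xi + G (n + 1) * (xi * y)) :
    ∀ n k : ℤ, (((-1) ^ n : ℤˣ) : R) * F k
      = G (n - 2) * xi * F (n + k) - G (n - 1) * F (n + k - 1) := by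
  -- cancellation lemmas
  have cancelx : ∀ a b : R, a * x = b * x → a = b := by
    intro a b hab
    have h2 := congrArg (· * xi) hab
    simpa [mul_assoc, hx] using h2
  have cancelxi : ∀ a b : R, a * xi = b * xi → a = b := by
    intro a b hab
    have h2 := congrArg (· * x) hab
    simpa [mul_assoc, hx'] using h2
  -- initial values
  have hGm1 : G (-1) = 0 := by
    have h := hGrec (-1)
    rw [show (-1 : ℤ) + 2 = 1 by norm_num, show (-1 : ℤ) + 1 = 0 by norm_num,
      hG1, hG0] at h
    have h2 : G (-1) * xi = 0 * xi := by
      linear_combination (norm := noncomm_ring) -h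
    exact cancelxi _ _ h2
  have hGm2 : G (-2) * xi = 1 := by
    have h := hGrec (-2)
    rw [show (-2 : ℤ) + 2 = 0 by norm_num, show (-2 : ℤ) + 1 = -1 by norm_num,
      hG0, hGm1] at h
    linear_combination (norm := noncomm_ring) -h
  -- the left-handed recursion for F
  have L : ∀ n : ℤ, F (n + 2) = x * F n + y * F (n + 1) := by
    have hF2 : F 2 = F 0 * x + F 1 * y := by
      have h := hFrec 0
      rwa [show (0 : ℤ) + 2 = 2 by norm_num, show (0 : ℤ) + 1 = 1 by norm_num] at h
    have hF3 : F 3 = F 1 * x + F 2 * y := by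
      have h := hFrec 1
      rwa [show (1 : ℤ) + 2 = 3 by norm_num, show (1 : ℤ) + 1 = 2 by norm_num] at h
    have main : ∀ n : ℤ, (F (n + 2) = x * F n + y * F (n + 1)) ∧
        (F (n + 3) = x * F (n + 1) + y * F (n + 2)) := by
      intro n
      induction n using Int.induction_on with
      | zero =>
        rw [show (0 : ℤ) + 2 = 2 by norm_num, show (0 : ℤ) + 1 = 1 by norm_num,
          show (0 : ℤ) + 3 = 3 by norm_num]
        constructor
        · rw [hF2, hF0, hF1]; noncomm_ring
        · rw [hF3, hF2, hF0, hF1]; noncomm_ring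
      | succ n ih =>
        obtain ⟨ih1, ih2⟩ := ih
        constructor
        · rw [show (n : ℤ) + 1 + 2 = (n : ℤ) + 3 by ring,
            show (n : ℤ) + 1 + 1 = (n : ℤ) + 2 by ring]
          exact ih2
        · rw [show (n : ℤ) + 1 + 3 = (n : ℤ) + 4 by ring,
            show (n : ℤ) + 1 + 1 = (n : ℤ) + 2 by ring,
            show (n : ℤ) + 1 + 2 = (n : ℤ) + 3 by ring]
          -- goal : F (n+4) = x * F (n+2) + y * F (n+3)
          have e0 := hFrec n
          have e1 : F ((n : ℤ) + 4) = F ((n : ℤ) + 2) * x + F ((n : ℤ) + 3) * y := by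
            have h := hFrec ((n : ℤ) + 2)
            rwa [show (n : ℤ) + 2 + 2 = (n : ℤ) + 4 by ring,
              show (n : ℤ) + 2 + 1 = (n : ℤ) + 3 by ring] at h
          have e2 : F ((n : ℤ) + 3) = F ((n : ℤ) + 1) * x + F ((n : ℤ) + 2) * y := by
            have h := hFrec ((n : ℤ) + 1)
            rwa [show (n : ℤ) + 1 + 2 = (n : ℤ) + 3 by ring,
              show (n : ℤ) + 1 + 1 = (n : ℤ) + 2 by ring] at h
          linear_combination (norm := noncomm_ring)
            e1 + ih1 * x + ih2 * y - x * e0 - y * e2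
      | pred n ih =>
        obtain ⟨ih1, ih2⟩ := ih
        constructor
        · -- F (-n-1+2) = x * F (-n-1) + y * F (-n-1+1)
          rw [show -(n : ℤ) - 1 + 2 = -(n : ℤ) + 1 by ring,
            show -(n : ℤ) - 1 + 1 = -(n : ℤ) by ring]
          have hA : F (-(n : ℤ) + 1) = F (-(n : ℤ) - 1) * x + F (-(n : ℤ)) * y := by
            have h := hFrec (-(n : ℤ) - 1)
            rwa [show -(n : ℤ) - 1 + 2 = -(n : ℤ) + 1 by ring,
              show -(n : ℤ) - 1 + 1 = -(n : ℤ) by ring] at h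
          have hB := hFrec (-(n : ℤ))
          have hC : F (-(n : ℤ) + 3) = F (-(n : ℤ) + 1) * x + F (-(n : ℤ) + 2) * y := by
            have h := hFrec (-(n : ℤ) + 1)
            rwa [show -(n : ℤ) + 1 + 2 = -(n : ℤ) + 3 by ring,
              show -(n : ℤ) + 1 + 1 = -(n : ℤ) + 2 by ring] at h
          have h : F (-(n : ℤ) + 1) * x = (x * F (-(n : ℤ) - 1) + y * F (-(n : ℤ))) * x := by
            linear_combination (norm := noncomm_ring)
              x * hA - hC + ih2 - ih1 * y + y * hB
          exact cancelx _ _ h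
        · rw [show -(n : ℤ) - 1 + 3 = -(n : ℤ) + 2 by ring,
            show -(n : ℤ) - 1 + 1 = -(n : ℤ) by ring,
            show -(n : ℤ) - 1 + 2 = -(n : ℤ) + 1 by ring]
          exact ih1
    exact fun n => (main n).1
  -- the key consequence of the left recursion
  have key : ∀ m : ℤ, xi * F (m + 1) = F (m - 1) + xi * y * F m := by
    intro m
    have h := L (m - 1)
    rw [show m - 1 + 2 = m + 1 by ring, show m - 1 + 1 = m by ring] at h
    rw [h]
    linear_combination (norm := noncomm_ring) hx' * F (m - 1)
  -- the induction step
  have step : ∀ n m : ℤ, G (n - 1) * xi * F (m + 1) - G n * F m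
      = -(G (n - 2) * xi * F m - G (n - 1) * F (m - 1)) := by
    intro n m
    have hG : G n = G (n - 2) * xi + G (n - 1) * (xi * y) := by
      have h := hGrec (n - 2)
      rwa [show n - 2 + 2 = n by ring, show n - 2 + 1 = n - 1 by ring] at h
    have hk := key m
    linear_combination (norm := noncomm_ring) G (n - 1) * hk - hG * F m
  -- the sign lemma
  have hc : ∀ m : ℤ, (((-1) ^ (m + 1) : ℤˣ) : R) = -(((-1) ^ m : ℤˣ) : R) := by
    intro m
    rw [zpow_add_one]
    push_cast
    rw [mul_neg_one]
  intro n k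
  induction n using Int.induction_on with
  | zero =>
    rw [show (0 : ℤ) - 2 = -2 by norm_num, show (0 : ℤ) - 1 = -1 by norm_num,
      show (0 : ℤ) + k = k by ring, hGm2, hGm1]
    simp
  | succ n ih =>
    rw [show (n : ℤ) + 1 - 2 = (n : ℤ) - 1 by ring,
      show (n : ℤ) + 1 + k - 1 = (n : ℤ) + k by ring,
      show (n : ℤ) + 1 + k = (n : ℤ) + k + 1 by ring,
      show (n : ℤ) + 1 - 1 = (n : ℤ) by ring,
      hc n, neg_mul, ih]
    exact (step n ((n : ℤ) + k)).symm
  | pred n ih =>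
    have hstep := step (-(n : ℤ) - 1) (-(n : ℤ) + k - 1)
    rw [show -(n : ℤ) - 1 - 1 = -(n : ℤ) - 2 by ring,
      show -(n : ℤ) + k - 1 + 1 = -(n : ℤ) + k by ring,
      show -(n : ℤ) - 1 - 2 = -(n : ℤ) - 3 by ring,
      show -(n : ℤ) + k - 1 - 1 = -(n : ℤ) + k - 2 by ring] at hstep
    -- hstep : G (-n-2) * xi * F (-n+k) - G (-n-1) * F (-n+k-1)
    --        = -(G (-n-3) * xi * F (-n+k-1) - G (-n-2) * F (-n+k-2))
    rw [show -(n : ℤ) + k - 1 = -(n : ℤ) + k - 1 by ring] at hstep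
    have hc' : (((-1) ^ (-(n : ℤ)) : ℤˣ) : R) = -(((-1) ^ (-(n : ℤ) - 1) : ℤˣ) : R) := by
      have h := hc (-(n : ℤ) - 1)
      rwa [show -(n : ℤ) - 1 + 1 = -(n : ℤ) by ring] at h
    rw [← ih, hc'] at hstep
    rw [show -(n : ℤ) - 1 - 2 = -(n : ℤ) - 3 by ring,
      show -(n : ℤ) - 1 + k - 1 = -(n : ℤ) + k - 2 by ring,
      show -(n : ℤ) - 1 + k = -(n : ℤ) + k - 1 by ring,
      show -(n : ℤ) - 1 - 1 = -(n : ℤ) - 2 by ring]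
    linear_combination (norm := noncomm_ring) -hstep
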